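/- Let r⁺, r⁻ satisfy the partial cocycle identities (CCI⁺), (CCI⁻) and the balance identity (Bal). Let η⁺ and η⁻ be finite configurations with |η⁺| = |η⁻| = n, with duplicate-free enumerations η⁺ = (x₁, …, xₙ) and η⁻ = (y₁, …, yₙ). Then for all configurations γ⁺, γ⁻ ⊆ X: R(γ⁺, γ⁻, η⁺, η⁻) = r(γ⁺, γ⁻, x₁, y₁)·r(γ⁺∪{x₁}, γ⁻∪{y₁}, x₂, y₂)·r(γ⁺∪{x₁,x₂}, γ⁻∪{y₁,y₂}, x₃, y₃)·…·r(γ⁺∪{x₁,…,x_{n−1}}, γ⁻∪{y₁,…,y_{n−1}}, xₙ, yₙ). -/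
import Mathlib


open scoped NNReal

/-- Iterated product of the partial relative energy density `r⁺` along an
enumeration (list) of a finite configuration. -/
def RplusL {X : Type*} (rp : Set X → Set X → X → ℝ≥0) (γm : Set X) :
    Set X → List X → ℝ≥0
  | _, [] => 1
  | γp, x :: xs => rp γp γm x * RplusL rp γm (insert x γp) xs

/-- `R⁺(γ⁺, γ⁻, η⁺)`: the iterated product of `r⁺` along a (fixed, arbitrary)
duplicate-free enumeration of the finite configuration `η⁺`; under (CCI⁺) it is
independent of the enumeration. -/
noncomputable def Rplus {X : Type*} (rp : Set X → Set X → X → ℝ≥0)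
    (γp γm : Set X) (η : Finset X) : ℝ≥0 :=
  RplusL rp γm γp η.toList

/-- Iterated product of the partial relative energy density `r⁻` along an
enumeration (list) of a finite configuration. -/
def RminusL {X : Type*} (rm : Set X → Set X → X → ℝ≥0) (γp : Set X) :
    Set X → List X → ℝ≥0
  | _, [] => 1
  | γm, y :: ys => rm γp γm y * RminusL rm γp (insert y γm) ys

/-- `R⁻(γ⁺, γ⁻, η⁻)`: the iterated product of `r⁻` along a (fixed, arbitrary)
duplicate-free enumeration of the finite configuration `η⁻`; under (CCI⁻) it is
independent of the enumeration. -/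
noncomputable def Rminus {X : Type*} (rm : Set X → Set X → X → ℝ≥0)
    (γp γm : Set X) (η : Finset X) : ℝ≥0 :=
  RminusL rm γp γm η.toList

/-- `R(γ⁺, γ⁻, η⁺, η⁻) := R⁺(γ⁺, γ⁻∪η⁻, η⁺)·R⁻(γ⁺, γ⁻, η⁻)`. -/
noncomputable def Rfull {X : Type*} (rp rm : Set X → Set X → X → ℝ≥0)
    (γp γm : Set X) (ηp ηm : Finset X) : ℝ≥0 :=
  Rplus rp γp (γm ∪ ↑ηm) ηp * Rminus rm γp γm ηm

/-- The relative energy density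
`r(γ⁺, γ⁻, x, y) := r⁺(γ⁺, γ⁻∪y, x)·r⁻(γ⁺, γ⁻, y)`. -/
def relE {X : Type*} (rp rm : Set X → Set X → X → ℝ≥0)
    (γp γm : Set X) (x y : X) : ℝ≥0 :=
  rp γp (insert y γm) x * rm γp γm y

/-- The chain product
`r(γ⁺, γ⁻, x₁, y₁)·r(γ⁺∪{x₁}, γ⁻∪{y₁}, x₂, y₂)·…·
 r(γ⁺∪{x₁,…,x_{n−1}}, γ⁻∪{y₁,…,y_{n−1}}, xₙ, yₙ)`
along two enumerations. -/
def relChain {X : Type*} (rp rm : Set X → Set X → X → ℝ≥0) :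
    Set X → Set X → List X → List X → ℝ≥0
  | _, _, [], _ => 1
  | _, _, _ :: _, [] => 1
  | γp, γm, x :: xs, y :: ys =>
      relE rp rm γp γm x y * relChain rp rm (insert x γp) (insert y γm) xs ys

section Aux

variable {X : Type*}

lemma foldr_insert_comm (ys : List X) (y : X) (γm : Set X) :
    ys.foldr insert (insert y γm) = insert y (ys.foldr insert γm) := by
  induction ys generalizing γm with
  | nil => rfl
  | cons z zs ih => simp [List.foldr, ih, Set.insert_comm]

lemma foldr_insert_eq [DecidableEq X] (ys : List X) (γm : Set X) :
    (γm ∪ ↑ys.toFinset : Set X) = ys.foldr insert γm := by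
  induction ys generalizing γm with
  | nil => simp
  | cons z zs ih =>
      simp only [List.toFinset_cons, Finset.coe_insert, List.foldr]
      rw [← ih]
      ext a; simp [or_comm, or_left_comm, or_assoc]

lemma RplusL_perm (rp : Set X → Set X → X → ℝ≥0)
    (hCCIp : ∀ (γp γm : Set X) (x x' : X),
      rp (insert x' γp) γm x * rp γp γm x' = rp (insert x γp) γm x' * rp γp γm x)
    (γm : Set X) {xs xs' : List X} (h : xs.Perm xs') :
    ∀ γp, RplusL rp γm γp xs = RplusL rp γm γp xs' := by
  induction h with
  | nil => intro; rfl
  | cons x h ih => intro γp; simp [RplusL, ih]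
  | swap x y l =>
      intro γp
      simp only [RplusL, ← mul_assoc, Set.insert_comm]
      rw [mul_comm (rp γp γm y) (rp (insert y γp) γm x), hCCIp,
        mul_comm (rp (insert x γp) γm y) (rp γp γm x)]
  | trans h1 h2 ih1 ih2 => intro γp; rw [ih1, ih2]

lemma RminusL_perm (rm : Set X → Set X → X → ℝ≥0)
    (hCCIm : ∀ (γp γm : Set X) (y y' : X),
      rm γp (insert y' γm) y * rm γp γm y' = rm γp (insert y γm) y' * rm γp γm y)
    (γp : Set X) {ys ys' : List X} (h : ys.Perm ys') :
    ∀ γm, RminusL rm γp γm ys = RminusL rm γp γm ys' := by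
  induction h with
  | nil => intro; rfl
  | cons y h ih => intro γm; simp [RminusL, ih]
  | swap x y l =>
      intro γm
      simp only [RminusL, ← mul_assoc, Set.insert_comm]
      rw [mul_comm (rm γp γm y) (rm γp (insert y γm) x), hCCIm,
        mul_comm (rm γp (insert x γm) y) (rm γp γm x)]
  | trans h1 h2 ih1 ih2 => intro γm; rw [ih1, ih2]

lemma bal_comm (rp rm : Set X → Set X → X → ℝ≥0)
    (hBal : ∀ (γp γm : Set X) (x y : X),
      rp γp (insert y γm) x * rm γp γm y = rm (insert x γp) γm y * rp γp γm x)
    (ys : List X) : ∀ (γp γm : Set X) (x : X),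
    rp γp (ys.foldr insert γm) x * RminusL rm γp γm ys =
      RminusL rm (insert x γp) γm ys * rp γp γm x := by
  induction ys with
  | nil => intro γp γm x; simp [RminusL]
  | cons y ys ih =>
      intro γp γm x
      have hfold : (y :: ys).foldr insert γm = ys.foldr insert (insert y γm) := by
        simp [List.foldr, foldr_insert_comm]
      rw [hfold]
      simp only [RminusL]
      calc rp γp (ys.foldr insert (insert y γm)) x *
            (rm γp γm y * RminusL rm γp (insert y γm) ys)
          = (rp γp (ys.foldr insert (insert y γm)) x *
              RminusL rm γp (insert y γm) ys) * rm γp γm y := by ring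
        _ = (RminusL rm (insert x γp) (insert y γm) ys * rp γp (insert y γm) x) *
              rm γp γm y := by rw [ih]
        _ = RminusL rm (insert x γp) (insert y γm) ys *
              (rp γp (insert y γm) x * rm γp γm y) := by ring
        _ = RminusL rm (insert x γp) (insert y γm) ys *
              (rm (insert x γp) γm y * rp γp γm x) := by rw [hBal]
        _ = rm (insert x γp) γm y * RminusL rm (insert x γp) (insert y γm) ys *
              rp γp γm x := by ring

lemma main_list (rp rm : Set X → Set X → X → ℝ≥0)
    (hBal : ∀ (γp γm : Set X) (x y : X),
      rp γp (insert y γm) x * rm γp γm y = rm (insert x γp) γm y * rp γp γm x) :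
    ∀ (xs ys : List X), xs.length = ys.length → ∀ (γp γm : Set X),
    RplusL rp (ys.foldr insert γm) γp xs * RminusL rm γp γm ys =
      relChain rp rm γp γm xs ys := by
  intro xs
  induction xs with
  | nil =>
      intro ys hlen γp γm
      have : ys = [] := by
        cases ys with
        | nil => rfl
        | cons y ys => simp at hlen
      subst this; simp [RplusL, RminusL, relChain]
  | cons x xs ih =>
      intro ys hlen γp γm
      cases ys with
      | nil => simp at hlen
      | cons y ys =>
        have hlen' : xs.length = ys.length := by simpa using hlen
        have hfold : (y :: ys).foldr insert γm = ys.foldr insert (insert y γm) := by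
          simp [List.foldr, foldr_insert_comm]
        simp only [RplusL, RminusL, relChain, relE, hfold]
        rw [← ih ys hlen' (insert x γp) (insert y γm)]
        calc rp γp (ys.foldr insert (insert y γm)) x *
              RplusL rp (ys.foldr insert (insert y γm)) (insert x γp) xs *
              (rm γp γm y * RminusL rm γp (insert y γm) ys)
            = (rp γp (ys.foldr insert (insert y γm)) x *
                RminusL rm γp (insert y γm) ys) * rm γp γm y *
                RplusL rp (ys.foldr insert (insert y γm)) (insert x γp) xs := by ring
          _ = (RminusL rm (insert x γp) (insert y γm) ys * rp γp (insert y γm) x) *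
                rm γp γm y *
                RplusL rp (ys.foldr insert (insert y γm)) (insert x γp) xs := by
                rw [bal_comm rp rm hBal]
          _ = rp γp (insert y γm) x * rm γp γm y *
                (RplusL rp (ys.foldr insert (insert y γm)) (insert x γp) xs *
                  RminusL rm (insert x γp) (insert y γm) ys) := by ring

end Aux

/-- Under (CCI⁺), (CCI⁻) and the balance identity (Bal), if `η⁺` and `η⁻` are
finite configurations of the same cardinality, with duplicate-free enumerations
`(x₁, …, xₙ)` and `(y₁, …, yₙ)`, then `R(γ⁺, γ⁻, η⁺, η⁻)` equals the chain
product `r(γ⁺, γ⁻, x₁, y₁)·r(γ⁺∪{x₁}, γ⁻∪{y₁}, x₂, y₂)·…·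
r(γ⁺∪{x₁,…,x_{n−1}}, γ⁻∪{y₁,…,y_{n−1}}, xₙ, yₙ)`. -/
theorem R_eq_relChain {X : Type*} [DecidableEq X]
    (rp rm : Set X → Set X → X → ℝ≥0)
    (hCCIp : ∀ (γp γm : Set X) (x x' : X),
      rp (insert x' γp) γm x * rp γp γm x' = rp (insert x γp) γm x' * rp γp γm x)
    (hCCIm : ∀ (γp γm : Set X) (y y' : X),
      rm γp (insert y' γm) y * rm γp γm y' = rm γp (insert y γm) y' * rm γp γm y)
    (hBal : ∀ (γp γm : Set X) (x y : X),
      rp γp (insert y γm) x * rm γp γm y = rm (insert x γp) γm y * rp γp γm x)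
    (γp γm : Set X) (xs ys : List X)
    (hx : xs.Nodup) (hy : ys.Nodup) (hlen : xs.length = ys.length) :
    Rfull rp rm γp γm xs.toFinset ys.toFinset = relChain rp rm γp γm xs ys := by
  have hpx : xs.toFinset.toList.Perm xs := by
    exact List.toFinset_toList hx
  have hpy : ys.toFinset.toList.Perm ys := by
    exact List.toFinset_toList hy
  unfold Rfull Rplus Rminus
  rw [RplusL_perm rp hCCIp _ hpx, RminusL_perm rm hCCIm _ hpy,
    foldr_insert_eq, main_list rp rm hBal xs ys hlen]
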